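/- Let ℓ ≥ 2, 0 ≤ k ≤ ℓ, r ≥ 1. The intersection of the projective curve F̄_z ⊂ ℙ^ℓ(ℂ) (defined by the homogenized equations y_1⋯y_k·(y_1^r − y_ℓ^r) = z_1·y_0^{k+r} and z_i·(y_1^r − y_ℓ^r) = z_1·(y_i^r − y_ℓ^r) for 2 ≤ i ≤ ℓ−1) with the hyperplane at infinity {y_0 = 0} consists of exactly k·r^{ℓ-2} + r^{ℓ-1} distinct points, provided z_1,...,z_{ℓ-1} are nonzero and pairwise distinct. -/

import Mathlib

open Projectivization

/-- The `i`-th homogeneous coordinate (for `0 ≤ i ≤ ℓ`) of a vector `v : Fin (ℓ+1) → ℂ`. -/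
noncomputable def homCoord (ℓ : ℕ) (v : Fin (ℓ + 1) → ℂ) (i : ℕ) : ℂ :=
  if h : i < ℓ + 1 then v ⟨i, h⟩ else 0

/-- The projective curve `F̄_z ⊂ ℙ^ℓ(ℂ)` defined by the homogenized equations
`y_1 ⋯ y_k (y_1^r - y_ℓ^r) = z_1 y_0^(k+r)` and
`z_i (y_1^r - y_ℓ^r) = z_1 (y_i^r - y_ℓ^r)` for `2 ≤ i ≤ ℓ-1`. -/
def projCurve (ℓ k r : ℕ) (z : ℕ → ℂ) : Set (Projectivization ℂ (Fin (ℓ + 1) → ℂ)) :=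
  {P | (∏ a ∈ Finset.Icc 1 k, homCoord ℓ P.rep a) *
        (homCoord ℓ P.rep 1 ^ r - homCoord ℓ P.rep ℓ ^ r) =
          z 1 * homCoord ℓ P.rep 0 ^ (k + r) ∧
    ∀ i ∈ Finset.Icc 2 (ℓ - 1),
      z i * (homCoord ℓ P.rep 1 ^ r - homCoord ℓ P.rep ℓ ^ r) =
        z 1 * (homCoord ℓ P.rep i ^ r - homCoord ℓ P.rep ℓ ^ r)}

namespace Stmt8

noncomputable def rt (r : ℕ) (a : ℂ) : ℂ :=
  if h : 0 < r then Classical.choose (IsAlgClosed.exists_pow_nat_eq a h) else 0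

lemma rt_pow {r : ℕ} (hr : 0 < r) (a : ℂ) : rt r a ^ r = a := by
  rw [rt, dif_pos hr]
  exact Classical.choose_spec (IsAlgClosed.exists_pow_nat_eq a hr)

lemma rt_ne_zero {r : ℕ} (hr : 0 < r) {a : ℂ} (ha : a ≠ 0) : rt r a ≠ 0 := by
  intro h
  apply ha
  rw [← rt_pow hr a, h, zero_pow hr.ne']

noncomputable def rts (r : ℕ) (a : ℂ) : Finset ℂ :=
  (Polynomial.nthRootsFinset r (1 : ℂ)).image fun ζ => rt r a * ζ

lemma mem_rts {r : ℕ} (hr : 0 < r) {a : ℂ} (ha : a ≠ 0) {x : ℂ} :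
    x ∈ rts r a ↔ x ^ r = a := by
  constructor
  · intro hx
    rw [rts, Finset.mem_image] at hx
    obtain ⟨ζ, hζ, rfl⟩ := hx
    rw [Polynomial.mem_nthRootsFinset hr] at hζ
    rw [mul_pow, rt_pow hr, hζ, mul_one]
  · intro hx
    rw [rts, Finset.mem_image]
    refine ⟨x / rt r a, ?_, ?_⟩
    · rw [Polynomial.mem_nthRootsFinset hr, div_pow, rt_pow hr, hx, div_self ha]
    · rw [mul_comm, div_mul_cancel₀ _ (rt_ne_zero hr ha)]

lemma card_nthRootsFinset' {r : ℕ} (hr : 0 < r) : (Polynomial.nthRootsFinset r (1 : ℂ)).card = r :=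
  (Complex.isPrimitiveRoot_exp r hr.ne').card_nthRootsFinset

lemma card_rts {r : ℕ} (hr : 0 < r) {a : ℂ} (ha : a ≠ 0) : (rts r a).card = r := by
  rw [rts, Finset.card_image_of_injective _ (mul_right_injective₀ (rt_ne_zero hr ha))]
  exact card_nthRootsFinset' hr

lemma homCoord_coe {ℓ : ℕ} (v : Fin (ℓ + 1) → ℂ) (idx : Fin (ℓ + 1)) :
    homCoord ℓ v idx = v idx := by
  rw [homCoord, dif_pos idx.isLt]

lemma homCoord_eq {ℓ : ℕ} (v : Fin (ℓ + 1) → ℂ) {a : ℕ} (h : a < ℓ + 1) :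
    homCoord ℓ v a = v ⟨a, h⟩ := dif_pos h

lemma homCoord_smul {ℓ : ℕ} (c : ℂ) (v : Fin (ℓ + 1) → ℂ) (a : ℕ) :
    homCoord ℓ (c • v) a = c * homCoord ℓ v a := by
  rw [homCoord, homCoord]
  split
  · rfl
  · rw [mul_zero]

lemma homCoord_zero {ℓ : ℕ} (a : ℕ) : homCoord ℓ (0 : Fin (ℓ + 1) → ℂ) a = 0 := by
  rw [homCoord]; split <;> rfl

def piv (ℓ i : ℕ) : ℕ := if i = ℓ then 1 else ℓ

noncomputable def CA (ℓ r : ℕ) (idx : Fin (ℓ + 1)) : Finset ℂ :=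
  if (idx : ℕ) = 0 then {0} else if (idx : ℕ) = ℓ then {1} else Polynomial.nthRootsFinset r (1 : ℂ)

noncomputable def CB (ℓ r : ℕ) (z : ℕ → ℂ) (i : ℕ) (idx : Fin (ℓ + 1)) : Finset ℂ :=
  if (idx : ℕ) = 0 ∨ (idx : ℕ) = i then {0}
  else if (idx : ℕ) = piv ℓ i then {rt r (z (piv ℓ i) - z i)}
  else rts r (z idx - z i)

noncomputable def WF (ℓ k r : ℕ) (z : ℕ → ℂ) : Finset (Fin (ℓ + 1) → ℂ) :=
  Fintype.piFinset (CA ℓ r) ∪ (Finset.Icc 1 k).biUnion fun i => Fintype.piFinset (CB ℓ r z i)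

noncomputable def q (ℓ : ℕ) (v : Fin (ℓ + 1) → ℂ) : Projectivization ℂ (Fin (ℓ + 1) → ℂ) :=
  if h : v = 0 then
    Projectivization.mk ℂ (fun _ => 1) (by intro h0; simpa using congrFun h0 0)
  else Projectivization.mk ℂ v h

lemma q_eq {ℓ : ℕ} {v : Fin (ℓ + 1) → ℂ} (hv : v ≠ 0) :
    q ℓ v = Projectivization.mk ℂ v hv := by rw [q]; exact dif_neg hv

end Stmt8

namespace Stmt8

variable {ℓ k r : ℕ} {z : ℕ → ℂ}

lemma zdiff (hℓ : 2 ≤ ℓ) (hzℓ : z ℓ = 0)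
    (hznz : ∀ i ∈ Finset.Icc 1 (ℓ - 1), z i ≠ 0)
    (hzd : ∀ i ∈ Finset.Icc 1 (ℓ - 1), ∀ j ∈ Finset.Icc 1 (ℓ - 1), i ≠ j → z i ≠ z j)
    {i j : ℕ} (hi1 : 1 ≤ i) (hiℓ : i ≤ ℓ) (hj1 : 1 ≤ j) (hjℓ : j ≤ ℓ) (hne : j ≠ i) :
    z j - z i ≠ 0 := by
  rw [sub_ne_zero]
  rcases eq_or_ne j ℓ with rfl | hjl
  · rw [hzℓ]
    exact fun h => hznz i (Finset.mem_Icc.2 ⟨hi1, by omega⟩) h.symm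
  · rcases eq_or_ne i ℓ with rfl | hil
    · rw [hzℓ]
      exact hznz j (Finset.mem_Icc.2 ⟨hj1, by omega⟩)
    · exact hzd j (Finset.mem_Icc.2 ⟨hj1, by omega⟩) i (Finset.mem_Icc.2 ⟨hi1, by omega⟩) hne

lemma piv_one_le (hℓ : 2 ≤ ℓ) (i : ℕ) : 1 ≤ piv ℓ i := by rw [piv]; split <;> omega

lemma piv_le (hℓ : 2 ≤ ℓ) (i : ℕ) : piv ℓ i ≤ ℓ := by rw [piv]; split <;> omega

lemma piv_ne (hℓ : 2 ≤ ℓ) {i : ℕ} (hiℓ : i ≤ ℓ) : piv ℓ i ≠ i := by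
  rw [piv]; split <;> omega

lemma TA_spec (hr : 0 < r) (hℓ : 2 ≤ ℓ) {v : Fin (ℓ + 1) → ℂ}
    (hv : v ∈ Fintype.piFinset (CA ℓ r)) :
    homCoord ℓ v 0 = 0 ∧ homCoord ℓ v ℓ = 1 ∧
      ∀ j, 1 ≤ j → j ≤ ℓ → homCoord ℓ v j ^ r = 1 := by
  rw [Fintype.mem_piFinset] at hv
  have key : ∀ (a : ℕ) (h : a < ℓ + 1), homCoord ℓ v a ∈
      (if a = 0 then {0} else if a = ℓ then ({1} : Finset ℂ)
        else Polynomial.nthRootsFinset r (1 : ℂ)) := by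
    intro a h
    have h2 := hv ⟨a, h⟩
    rw [CA] at h2
    rw [homCoord_eq v h]
    exact h2
  have hl : homCoord ℓ v ℓ = 1 := by
    have h := key ℓ (by omega)
    rw [if_neg (by omega), if_pos rfl, Finset.mem_singleton] at h
    exact h
  refine ⟨?_, hl, ?_⟩
  · have h := key 0 (by omega)
    rw [if_pos rfl, Finset.mem_singleton] at h
    exact h
  · intro j hj1 hjℓ
    rcases eq_or_ne j ℓ with rfl | hjl
    · rw [hl, one_pow]
    · have h := key j (by omega)
      rw [if_neg (by omega), if_neg hjl, Polynomial.mem_nthRootsFinset hr] at h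
      exact h

lemma mem_TA (hr : 0 < r) (hℓ : 2 ≤ ℓ) {v : Fin (ℓ + 1) → ℂ}
    (h0 : homCoord ℓ v 0 = 0) (hl : homCoord ℓ v ℓ = 1)
    (hj : ∀ j, 1 ≤ j → j ≤ ℓ - 1 → homCoord ℓ v j ^ r = 1) :
    v ∈ Fintype.piFinset (CA ℓ r) := by
  rw [Fintype.mem_piFinset]
  intro idx
  rw [CA]
  have hidx := idx.isLt
  have hcoe : v idx = homCoord ℓ v idx := (homCoord_coe v idx).symm
  split_ifs with h1 h2
  · rw [Finset.mem_singleton, hcoe, h1]; exact h0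
  · rw [Finset.mem_singleton, hcoe, h2]; exact hl
  · rw [Polynomial.mem_nthRootsFinset hr, hcoe]
    exact hj idx (by omega) (by omega)

lemma TB_spec (hr : 0 < r) (hℓ : 2 ≤ ℓ) {i : ℕ} (hi1 : 1 ≤ i) (hiℓ : i ≤ ℓ)
    (hzd' : ∀ j, 1 ≤ j → j ≤ ℓ → j ≠ i → z j - z i ≠ 0)
    {v : Fin (ℓ + 1) → ℂ} (hv : v ∈ Fintype.piFinset (CB ℓ r z i)) :
    homCoord ℓ v 0 = 0 ∧ homCoord ℓ v i = 0 ∧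
      homCoord ℓ v (piv ℓ i) = rt r (z (piv ℓ i) - z i) ∧
      ∀ j, 1 ≤ j → j ≤ ℓ → homCoord ℓ v j ^ r = z j - z i := by
  rw [Fintype.mem_piFinset] at hv
  have key : ∀ (a : ℕ) (h : a < ℓ + 1), homCoord ℓ v a ∈
      (if a = 0 ∨ a = i then {0}
        else if a = piv ℓ i then ({rt r (z (piv ℓ i) - z i)} : Finset ℂ)
        else rts r (z a - z i)) := by
    intro a h
    have h2 := hv ⟨a, h⟩
    rw [CB] at h2
    rw [homCoord_eq v h]
    exact h2
  have hi0 : homCoord ℓ v i = 0 := by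
    have h := key i (by omega)
    rw [if_pos (Or.inr rfl), Finset.mem_singleton] at h
    exact h
  have hp : homCoord ℓ v (piv ℓ i) = rt r (z (piv ℓ i) - z i) := by
    have h := key (piv ℓ i) (by have := piv_le hℓ i; omega)
    rw [if_neg (by have := piv_one_le hℓ i; have := piv_ne hℓ hiℓ; omega),
      if_pos rfl, Finset.mem_singleton] at h
    exact h
  refine ⟨?_, hi0, hp, ?_⟩
  · have h := key 0 (by omega)
    rw [if_pos (Or.inl rfl), Finset.mem_singleton] at h
    exact h
  · intro j hj1 hjℓ
    rcases eq_or_ne j i with rfl | hji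
    · rw [hi0, zero_pow hr.ne', sub_self]
    · rcases eq_or_ne j (piv ℓ i) with rfl | hjp
      · rw [hp, rt_pow hr]
      · have h := key j (by omega)
        rw [if_neg (by omega), if_neg hjp,
          mem_rts hr (hzd' j hj1 hjℓ hji)] at h
        exact h

lemma mem_TB (hr : 0 < r) (hℓ : 2 ≤ ℓ) {i : ℕ} (hi1 : 1 ≤ i) (hiℓ : i ≤ ℓ)
    (hzd' : ∀ j, 1 ≤ j → j ≤ ℓ → j ≠ i → z j - z i ≠ 0)
    {v : Fin (ℓ + 1) → ℂ} (h0 : homCoord ℓ v 0 = 0) (hi : homCoord ℓ v i = 0)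
    (hp : homCoord ℓ v (piv ℓ i) = rt r (z (piv ℓ i) - z i))
    (hj : ∀ j, 1 ≤ j → j ≤ ℓ → homCoord ℓ v j ^ r = z j - z i) :
    v ∈ Fintype.piFinset (CB ℓ r z i) := by
  rw [Fintype.mem_piFinset]
  intro idx
  rw [CB]
  have hidx := idx.isLt
  have hcoe : v idx = homCoord ℓ v idx := (homCoord_coe v idx).symm
  split_ifs with h1 h2
  · rcases h1 with h1 | h1
    · rw [Finset.mem_singleton, hcoe, h1]; exact h0
    · rw [Finset.mem_singleton, hcoe, h1]; exact hi
  · rw [Finset.mem_singleton, hcoe, h2]; exact hp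
  · push_neg at h1
    rw [mem_rts hr (hzd' idx (by omega) (by omega) h1.2), hcoe]
    exact hj idx (by omega) (by omega)

end Stmt8

/-- Provided `z_1, …, z_{ℓ-1}` are nonzero and pairwise distinct (and `z_ℓ = 0`), the
intersection of the projective curve `F̄_z ⊂ ℙ^ℓ(ℂ)` with the hyperplane at infinity
`{y_0 = 0}` consists of exactly `k·r^(ℓ-2) + r^(ℓ-1)` distinct points. -/
theorem stmt_8 (ℓ k r : ℕ) (hℓ : 2 ≤ ℓ) (hk : k ≤ ℓ) (hr : 1 ≤ r)
    (z : ℕ → ℂ) (hzℓ : z ℓ = 0)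
    (hznz : ∀ i ∈ Finset.Icc 1 (ℓ - 1), z i ≠ 0)
    (hzd : ∀ i ∈ Finset.Icc 1 (ℓ - 1), ∀ j ∈ Finset.Icc 1 (ℓ - 1), i ≠ j → z i ≠ z j) :
    (projCurve ℓ k r z ∩ {P | homCoord ℓ P.rep 0 = 0}).ncard =
      k * r ^ (ℓ - 2) + r ^ (ℓ - 1) := by
  have hr0 : 0 < r := hr
  have hz1 : z 1 ≠ 0 := hznz 1 (Finset.mem_Icc.2 ⟨le_refl 1, by omega⟩)
  have hzd' : ∀ i, 1 ≤ i → i ≤ ℓ → ∀ j, 1 ≤ j → j ≤ ℓ → j ≠ i → z j - z i ≠ 0 :=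
    fun i hi1 hiℓ j hj1 hjℓ hne => Stmt8.zdiff hℓ hzℓ hznz hzd hi1 hiℓ hj1 hjℓ hne
  -- nonvanishing of elements of WF
  have hnz : ∀ v ∈ Stmt8.WF ℓ k r z, v ≠ 0 := by
    intro v hv
    rw [Stmt8.WF, Finset.mem_union] at hv
    rcases hv with hvA | hvB
    · obtain ⟨-, hl, -⟩ := Stmt8.TA_spec hr0 hℓ hvA
      intro h; rw [h, Stmt8.homCoord_zero] at hl; exact zero_ne_one hl
    · obtain ⟨i, hik, hvB⟩ := Finset.mem_biUnion.1 hvB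
      rw [Finset.mem_Icc] at hik
      have hi1 := hik.1
      have hiℓ : i ≤ ℓ := hik.2.trans hk
      obtain ⟨-, -, hp, -⟩ := Stmt8.TB_spec hr0 hℓ hi1 hiℓ (hzd' i hi1 hiℓ) hvB
      have hrtne := Stmt8.rt_ne_zero hr0
        (hzd' i hi1 hiℓ (Stmt8.piv ℓ i) (Stmt8.piv_one_le hℓ i) (Stmt8.piv_le hℓ i)
          (Stmt8.piv_ne hℓ hiℓ))
      intro h; rw [h, Stmt8.homCoord_zero] at hp; exact hrtne hp.symm
  -- the set equality
  have hset : projCurve ℓ k r z ∩ {P | homCoord ℓ P.rep 0 = 0}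
      = Stmt8.q ℓ '' ↑(Stmt8.WF ℓ k r z) := by
    ext P
    constructor
    · rintro ⟨⟨he1, he2⟩, h0⟩
      simp only [Set.mem_setOf_eq] at h0
      have hrepne := P.rep_nonzero
      set y : ℕ → ℂ := homCoord ℓ P.rep with hy
      have hall : ∀ j, 1 ≤ j → j ≤ ℓ →
          z 1 * (y j ^ r - y ℓ ^ r) = z j * (y 1 ^ r - y ℓ ^ r) := by
        intro j hj1 hjℓ
        rcases eq_or_ne j ℓ with rfl | hjl
        · rw [sub_self, mul_zero, hzℓ, zero_mul]
        · rcases eq_or_ne j 1 with rfl | hj1'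
          · ring
          · exact (he2 j (Finset.mem_Icc.2 ⟨by omega, by omega⟩)).symm
      have hRHS : z 1 * y 0 ^ (k + r) = 0 := by
        rw [h0, zero_pow (by omega : k + r ≠ 0), mul_zero]
      by_cases ht : y 1 ^ r - y ℓ ^ r = 0
      · -- Case A
        have hpow : ∀ j, 1 ≤ j → j ≤ ℓ → y j ^ r = y ℓ ^ r := by
          intro j hj1 hjℓ
          have h := hall j hj1 hjℓ
          rw [ht, mul_zero] at h
          have h2 := (mul_eq_zero.1 h).resolve_left hz1
          linear_combination h2
        have hlne : y ℓ ≠ 0 := by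
          intro hl0
          apply hrepne
          funext idx
          show P.rep idx = 0
          rw [← Stmt8.homCoord_coe P.rep idx]
          have hidx := idx.isLt
          rcases eq_or_ne (idx : ℕ) 0 with h | h
          · rw [h]; exact h0
          · have h2 := hpow idx (by omega) (by omega)
            rw [hl0, zero_pow hr0.ne'] at h2
            exact pow_eq_zero_iff hr0.ne' |>.1 h2
        set c := (y ℓ)⁻¹ with hc
        have hcne : c ≠ 0 := inv_ne_zero hlne
        have hwne : c • P.rep ≠ 0 := smul_ne_zero hcne hrepne
        refine ⟨c • P.rep, ?_, ?_⟩
        · apply Finset.mem_coe.2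
          apply Finset.mem_union_left
          apply Stmt8.mem_TA hr0 hℓ
          · rw [Stmt8.homCoord_smul, ← hy, h0, mul_zero]
          · rw [Stmt8.homCoord_smul, ← hy, hc]; exact inv_mul_cancel₀ hlne
          · intro j hj1 hjl
            rw [Stmt8.homCoord_smul, ← hy, mul_pow, hpow j hj1 (by omega), hc, inv_pow]
            exact inv_mul_cancel₀ (pow_ne_zero r hlne)
        · rw [Stmt8.q_eq hwne]
          exact ((Projectivization.mk_eq_mk_iff' ℂ _ _ hwne P.rep_nonzero).2
            ⟨c, rfl⟩).trans P.mk_rep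
      · -- Case B
        have hprod : ∏ a ∈ Finset.Icc 1 k, y a = 0 := by
          rcases mul_eq_zero.1 (he1.trans hRHS) with h | h
          · exact h
          · exact absurd h ht
        obtain ⟨i, hik, hyi⟩ := Finset.prod_eq_zero_iff.1 hprod
        rw [Finset.mem_Icc] at hik
        have hi1 : 1 ≤ i := hik.1
        have hiℓ : i ≤ ℓ := hik.2.trans hk
        set u := (y 1 ^ r - y ℓ ^ r) / z 1 with hu
        have hune : u ≠ 0 := div_ne_zero ht hz1
        have ht' : y 1 ^ r - y ℓ ^ r = z 1 * u := by
          rw [hu, mul_div_cancel₀ _ hz1]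
        have hpow1 : ∀ j, 1 ≤ j → j ≤ ℓ → y j ^ r = y ℓ ^ r + z j * u := by
          intro j hj1 hjℓ
          have h := hall j hj1 hjℓ
          rw [ht'] at h
          have h2 : z 1 * (y j ^ r - y ℓ ^ r) = z 1 * (z j * u) := by rw [h]; ring
          have h3 := mul_left_cancel₀ hz1 h2
          linear_combination h3
        have hyℓr : y ℓ ^ r = -(z i * u) := by
          have h := hpow1 i hi1 hiℓ
          rw [hyi, zero_pow hr0.ne'] at h
          linear_combination -h
        have hpow2 : ∀ j, 1 ≤ j → j ≤ ℓ → y j ^ r = (z j - z i) * u := by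
          intro j hj1 hjℓ
          rw [hpow1 j hj1 hjℓ, hyℓr]; ring
        set c1 := Stmt8.rt r u⁻¹ with hc1
        have hc1r : c1 ^ r = u⁻¹ := Stmt8.rt_pow hr0 _
        have hc1ne : c1 ≠ 0 := Stmt8.rt_ne_zero hr0 (inv_ne_zero hune)
        set pi := Stmt8.piv ℓ i with hpi
        have hpine : pi ≠ i := Stmt8.piv_ne hℓ hiℓ
        have hpi1 : 1 ≤ pi := Stmt8.piv_one_le hℓ i
        have hpiℓ : pi ≤ ℓ := Stmt8.piv_le hℓ i
        have hane : z pi - z i ≠ 0 := hzd' i hi1 hiℓ pi hpi1 hpiℓ hpine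
        have hb : (c1 * y pi) ^ r = z pi - z i := by
          rw [mul_pow, hc1r, hpow2 pi hpi1 hpiℓ]
          field_simp
        have hbne : c1 * y pi ≠ 0 := by
          intro h; rw [h, zero_pow hr0.ne'] at hb; exact hane hb.symm
        have hypine : y pi ≠ 0 := fun h => hbne (by rw [h, mul_zero])
        set d := Stmt8.rt r (z pi - z i) / (c1 * y pi) with hd
        have hdr : d ^ r = 1 := by
          rw [hd, div_pow, hb, Stmt8.rt_pow hr0, div_self hane]
        have hdne : d ≠ 0 := by
          intro h; rw [h, zero_pow hr0.ne'] at hdr; exact zero_ne_one hdr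
        set c := d * c1 with hc
        have hcne : c ≠ 0 := mul_ne_zero hdne hc1ne
        have hcr : ∀ j, 1 ≤ j → j ≤ ℓ → (c * y j) ^ r = z j - z i := by
          intro j hj1 hjℓ
          rw [hc, mul_pow, mul_pow, hdr, one_mul, hc1r, hpow2 j hj1 hjℓ]
          field_simp
        have hcp : c * y pi = Stmt8.rt r (z pi - z i) := by
          rw [hc, hd]; field_simp
        have hwne : c • P.rep ≠ 0 := smul_ne_zero hcne hrepne
        refine ⟨c • P.rep, ?_, ?_⟩
        · apply Finset.mem_coe.2
          apply Finset.mem_union_right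
          refine Finset.mem_biUnion.2 ⟨i, Finset.mem_Icc.2 hik, ?_⟩
          apply Stmt8.mem_TB hr0 hℓ hi1 hiℓ (hzd' i hi1 hiℓ)
          · rw [Stmt8.homCoord_smul, ← hy, h0, mul_zero]
          · rw [Stmt8.homCoord_smul, ← hy, hyi, mul_zero]
          · rw [Stmt8.homCoord_smul, ← hy, ← hpi]; exact hcp
          · intro j hj1 hjℓ
            rw [Stmt8.homCoord_smul, ← hy]
            exact hcr j hj1 hjℓ
        · rw [Stmt8.q_eq hwne]
          exact ((Projectivization.mk_eq_mk_iff' ℂ _ _ hwne P.rep_nonzero).2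
            ⟨c, rfl⟩).trans P.mk_rep
    · rintro ⟨v, hv, rfl⟩
      rw [Finset.mem_coe] at hv
      have hvne : v ≠ 0 := hnz v hv
      obtain ⟨cu, hcrep⟩ := Projectivization.exists_smul_eq_mk_rep ℂ v hvne
      have hrep : (Stmt8.q ℓ v).rep = (cu : ℂ) • v := by
        rw [Stmt8.q_eq hvne, ← hcrep, Units.smul_def]
      have hY : ∀ j, homCoord ℓ (Stmt8.q ℓ v).rep j = (cu : ℂ) * homCoord ℓ v j :=
        fun j => by rw [hrep, Stmt8.homCoord_smul]
      rw [Stmt8.WF, Finset.mem_union] at hv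
      rcases hv with hvA | hvB
      · obtain ⟨h0, hl, hjp⟩ := Stmt8.TA_spec hr0 hℓ hvA
        have h1r : homCoord ℓ v 1 ^ r = 1 := hjp 1 (le_refl 1) (by omega)
        have hlr : homCoord ℓ v ℓ ^ r = 1 := hjp ℓ (by omega) (le_refl ℓ)
        refine ⟨⟨?_, ?_⟩, ?_⟩
        · have hkr : k + r ≠ 0 := by omega
          simp only [hY, mul_pow, h1r, hlr, h0, mul_zero, sub_self, mul_one]
          simp [zero_pow hkr]
        · intro i hi
          simp only [hY, mul_pow, h1r, hlr, hjp i (by rw [Finset.mem_Icc] at hi; omega)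
            (by rw [Finset.mem_Icc] at hi; omega), sub_self, mul_zero]
        · show homCoord ℓ (Stmt8.q ℓ v).rep 0 = 0
          rw [hY 0, h0, mul_zero]
      · obtain ⟨i, hik, hvB⟩ := Finset.mem_biUnion.1 hvB
        rw [Finset.mem_Icc] at hik
        have hi1 : 1 ≤ i := hik.1
        have hiℓ : i ≤ ℓ := hik.2.trans hk
        obtain ⟨h0, hi0, hp, hjp⟩ := Stmt8.TB_spec hr0 hℓ hi1 hiℓ (hzd' i hi1 hiℓ) hvB
        refine ⟨⟨?_, ?_⟩, ?_⟩
        · have hz0 : homCoord ℓ (Stmt8.q ℓ v).rep i = 0 := by rw [hY i, hi0, mul_zero]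
          rw [Finset.prod_eq_zero (Finset.mem_Icc.2 hik) hz0, zero_mul,
            hY 0, h0, mul_zero, zero_pow (by omega : k + r ≠ 0), mul_zero]
        · intro i' hi'
          rw [Finset.mem_Icc] at hi'
          simp only [hY, mul_pow, hjp 1 (le_refl 1) (by omega), hjp ℓ (by omega) (le_refl ℓ),
            hjp i' (by omega) (by omega), hzℓ]
          ring
        · show homCoord ℓ (Stmt8.q ℓ v).rep 0 = 0
          rw [hY 0, h0, mul_zero]
  -- injectivity
  have hinj : Set.InjOn (Stmt8.q ℓ) ↑(Stmt8.WF ℓ k r z) := by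
    intro v hv w hw hqe
    rw [Finset.mem_coe] at hv hw
    have hvne : v ≠ 0 := hnz v hv
    have hwne : w ≠ 0 := hnz w hw
    rw [Stmt8.q_eq hvne, Stmt8.q_eq hwne, Projectivization.mk_eq_mk_iff'] at hqe
    obtain ⟨a, ha⟩ := hqe
    have hane : a ≠ 0 := by
      rintro rfl; rw [zero_smul] at ha; exact hvne ha.symm
    have hvw : ∀ j, homCoord ℓ v j = a * homCoord ℓ w j :=
      fun j => by rw [← ha, Stmt8.homCoord_smul]
    rw [Stmt8.WF, Finset.mem_union] at hv hw
    rcases hv with hvA | hvB <;> rcases hw with hwA | hwB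
    · obtain ⟨-, hvl, -⟩ := Stmt8.TA_spec hr0 hℓ hvA
      obtain ⟨-, hwl, -⟩ := Stmt8.TA_spec hr0 hℓ hwA
      have ha1 : a = 1 := by
        have h := hvw ℓ
        rw [hvl, hwl, mul_one] at h
        exact h.symm
      rw [← ha, ha1, one_smul]
    · obtain ⟨-, -, hvp⟩ := Stmt8.TA_spec hr0 hℓ hvA
      obtain ⟨i, hik, hwB⟩ := Finset.mem_biUnion.1 hwB
      rw [Finset.mem_Icc] at hik
      have hi1 : 1 ≤ i := hik.1
      have hiℓ : i ≤ ℓ := hik.2.trans hk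
      obtain ⟨-, hwi, -, -⟩ := Stmt8.TB_spec hr0 hℓ hi1 hiℓ (hzd' i hi1 hiℓ) hwB
      exfalso
      have h := hvp i hi1 hiℓ
      rw [hvw i, hwi, mul_zero, zero_pow hr0.ne'] at h
      exact zero_ne_one h
    · obtain ⟨-, -, hwp⟩ := Stmt8.TA_spec hr0 hℓ hwA
      obtain ⟨i, hik, hvB⟩ := Finset.mem_biUnion.1 hvB
      rw [Finset.mem_Icc] at hik
      have hi1 : 1 ≤ i := hik.1
      have hiℓ : i ≤ ℓ := hik.2.trans hk
      obtain ⟨-, hvi, -, -⟩ := Stmt8.TB_spec hr0 hℓ hi1 hiℓ (hzd' i hi1 hiℓ) hvB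
      exfalso
      have h := hvw i
      rw [hvi] at h
      rcases mul_eq_zero.1 h.symm with h' | h'
      · exact hane h'
      · have h2 := hwp i hi1 hiℓ
        rw [h', zero_pow hr0.ne'] at h2
        exact zero_ne_one h2
    · obtain ⟨i, hik, hvB⟩ := Finset.mem_biUnion.1 hvB
      obtain ⟨i', hik', hwB⟩ := Finset.mem_biUnion.1 hwB
      rw [Finset.mem_Icc] at hik hik'
      have hi1 : 1 ≤ i := hik.1
      have hiℓ : i ≤ ℓ := hik.2.trans hk
      have hi1' : 1 ≤ i' := hik'.1
      have hiℓ' : i' ≤ ℓ := hik'.2.trans hk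
      obtain ⟨-, hvi, hvp, -⟩ := Stmt8.TB_spec hr0 hℓ hi1 hiℓ (hzd' i hi1 hiℓ) hvB
      obtain ⟨-, hwi, hwp, hwpow⟩ :=
        Stmt8.TB_spec hr0 hℓ hi1' hiℓ' (hzd' i' hi1' hiℓ') hwB
      rcases eq_or_ne i i' with rfl | hii'
      · have hrtne := Stmt8.rt_ne_zero hr0
          (hzd' i hi1 hiℓ (Stmt8.piv ℓ i) (Stmt8.piv_one_le hℓ i) (Stmt8.piv_le hℓ i)
            (Stmt8.piv_ne hℓ hiℓ))
        have ha1 : a = 1 := by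
          have h := hvw (Stmt8.piv ℓ i)
          rw [hvp, hwp] at h
          have h2 : a * Stmt8.rt r (z (Stmt8.piv ℓ i) - z i) =
              1 * Stmt8.rt r (z (Stmt8.piv ℓ i) - z i) := by
            rw [one_mul]; exact h.symm
          exact mul_right_cancel₀ hrtne h2
        rw [← ha, ha1, one_smul]
      · exfalso
        have h := hvw i
        rw [hvi] at h
        rcases mul_eq_zero.1 h.symm with h' | h'
        · exact hane h'
        · have h2 := hwpow i hi1 hiℓ
          rw [h', zero_pow hr0.ne'] at h2
          exact hzd' i' hi1' hiℓ' i hi1 hiℓ hii' h2.symm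
  -- cardinality
  have cardTA : (Fintype.piFinset (Stmt8.CA ℓ r)).card = r ^ (ℓ - 1) := by
    rw [Fintype.card_piFinset]
    rw [← Finset.prod_filter_mul_prod_filter_not Finset.univ
      (fun idx : Fin (ℓ + 1) => (idx : ℕ) = 0 ∨ (idx : ℕ) = ℓ)]
    have h1 : ∀ idx ∈ Finset.univ.filter
        (fun idx : Fin (ℓ + 1) => (idx : ℕ) = 0 ∨ (idx : ℕ) = ℓ),
        (Stmt8.CA ℓ r idx).card = 1 := by
      intro idx hidx
      rw [Finset.mem_filter] at hidx
      rw [Stmt8.CA]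
      rcases hidx.2 with h | h
      · rw [if_pos h, Finset.card_singleton]
      · rw [if_neg (by omega), if_pos h, Finset.card_singleton]
    have h2 : ∀ idx ∈ Finset.univ.filter
        (fun idx : Fin (ℓ + 1) => ¬((idx : ℕ) = 0 ∨ (idx : ℕ) = ℓ)),
        (Stmt8.CA ℓ r idx).card = r := by
      intro idx hidx
      rw [Finset.mem_filter] at hidx
      push_neg at hidx
      rw [Stmt8.CA, if_neg hidx.2.1, if_neg hidx.2.2]
      exact Stmt8.card_nthRootsFinset' hr0
    rw [Finset.prod_congr rfl h1, Finset.prod_congr rfl h2, Finset.prod_const_one, one_mul,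
      Finset.prod_const]
    congr 1
    have hfeq : Finset.univ.filter
        (fun idx : Fin (ℓ + 1) => (idx : ℕ) = 0 ∨ (idx : ℕ) = ℓ)
        = {(⟨0, by omega⟩ : Fin (ℓ + 1)), ⟨ℓ, by omega⟩} := by
      ext idx
      simp only [Finset.mem_filter, Finset.mem_univ, true_and, Finset.mem_insert,
        Finset.mem_singleton, Fin.ext_iff, Fin.val_mk]
    have hcc := Finset.card_filter_add_card_filter_not (s := (Finset.univ : Finset (Fin (ℓ + 1))))
      (p := fun idx : Fin (ℓ + 1) => (idx : ℕ) = 0 ∨ (idx : ℕ) = ℓ)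
    rw [hfeq] at hcc
    rw [Finset.card_pair (by simp [Fin.ext_iff]; omega), Finset.card_univ, Fintype.card_fin] at hcc
    omega
  have cardTB : ∀ i, 1 ≤ i → i ≤ ℓ →
      (Fintype.piFinset (Stmt8.CB ℓ r z i)).card = r ^ (ℓ - 2) := by
    intro i hi1 hiℓ
    have hpi1 : 1 ≤ Stmt8.piv ℓ i := Stmt8.piv_one_le hℓ i
    have hpiℓ : Stmt8.piv ℓ i ≤ ℓ := Stmt8.piv_le hℓ i
    have hpine : Stmt8.piv ℓ i ≠ i := Stmt8.piv_ne hℓ hiℓ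
    rw [Fintype.card_piFinset]
    rw [← Finset.prod_filter_mul_prod_filter_not Finset.univ
      (fun idx : Fin (ℓ + 1) => (idx : ℕ) = 0 ∨ (idx : ℕ) = i ∨ (idx : ℕ) = Stmt8.piv ℓ i)]
    have h1 : ∀ idx ∈ Finset.univ.filter
        (fun idx : Fin (ℓ + 1) => (idx : ℕ) = 0 ∨ (idx : ℕ) = i ∨ (idx : ℕ) = Stmt8.piv ℓ i),
        (Stmt8.CB ℓ r z i idx).card = 1 := by
      intro idx hidx
      rw [Finset.mem_filter] at hidx
      rw [Stmt8.CB]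
      rcases hidx.2 with h | h | h
      · rw [if_pos (Or.inl h), Finset.card_singleton]
      · rw [if_pos (Or.inr h), Finset.card_singleton]
      · rw [if_neg (by omega), if_pos h, Finset.card_singleton]
    have h2 : ∀ idx ∈ Finset.univ.filter
        (fun idx : Fin (ℓ + 1) => ¬((idx : ℕ) = 0 ∨ (idx : ℕ) = i ∨ (idx : ℕ) = Stmt8.piv ℓ i)),
        (Stmt8.CB ℓ r z i idx).card = r := by
      intro idx hidx
      rw [Finset.mem_filter] at hidx
      push_neg at hidx
      obtain ⟨-, hn0, hni, hnp⟩ := hidx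
      have hidxℓ := idx.isLt
      rw [Stmt8.CB, if_neg (by tauto), if_neg hnp]
      exact Stmt8.card_rts hr0 (hzd' i hi1 hiℓ idx (by omega) (by omega) hni)
    rw [Finset.prod_congr rfl h1, Finset.prod_congr rfl h2, Finset.prod_const_one, one_mul,
      Finset.prod_const]
    congr 1
    have hfeq : Finset.univ.filter
        (fun idx : Fin (ℓ + 1) => (idx : ℕ) = 0 ∨ (idx : ℕ) = i ∨ (idx : ℕ) = Stmt8.piv ℓ i)
        = {(⟨0, by omega⟩ : Fin (ℓ + 1)), ⟨i, by omega⟩, ⟨Stmt8.piv ℓ i, by omega⟩} := by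
      ext idx
      simp only [Finset.mem_filter, Finset.mem_univ, true_and, Finset.mem_insert,
        Finset.mem_singleton, Fin.ext_iff, Fin.val_mk]
    have hcc := Finset.card_filter_add_card_filter_not (s := (Finset.univ : Finset (Fin (ℓ + 1))))
      (p := fun idx : Fin (ℓ + 1) => (idx : ℕ) = 0 ∨ (idx : ℕ) = i ∨ (idx : ℕ) = Stmt8.piv ℓ i)
    rw [hfeq] at hcc
    have hc3 : ({(⟨0, by omega⟩ : Fin (ℓ + 1)), ⟨i, by omega⟩, ⟨Stmt8.piv ℓ i, by omega⟩} :
        Finset (Fin (ℓ + 1))).card = 3 := by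
      rw [Finset.card_insert_of_notMem (by simp [Fin.ext_iff]; omega),
        Finset.card_insert_of_notMem (by simp [Fin.ext_iff]; omega),
        Finset.card_singleton]
    rw [hc3, Finset.card_univ, Fintype.card_fin] at hcc
    omega
  have hdisjBB : ∀ i ∈ Finset.Icc 1 k, ∀ i' ∈ Finset.Icc 1 k, i ≠ i' →
      Disjoint (Fintype.piFinset (Stmt8.CB ℓ r z i)) (Fintype.piFinset (Stmt8.CB ℓ r z i')) := by
    intro i hik i' hik' hne
    rw [Finset.mem_Icc] at hik hik'
    have hi1 := hik.1
    have hiℓ : i ≤ ℓ := hik.2.trans hk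
    have hi1' := hik'.1
    have hiℓ' : i' ≤ ℓ := hik'.2.trans hk
    rw [Finset.disjoint_left]
    intro v hvB hvB'
    obtain ⟨-, hvi, -, -⟩ := Stmt8.TB_spec hr0 hℓ hi1 hiℓ (hzd' i hi1 hiℓ) hvB
    obtain ⟨-, -, -, hpow'⟩ := Stmt8.TB_spec hr0 hℓ hi1' hiℓ' (hzd' i' hi1' hiℓ') hvB'
    have h := hpow' i hi1 hiℓ
    rw [hvi, zero_pow hr0.ne'] at h
    exact hzd' i' hi1' hiℓ' i hi1 hiℓ hne h.symm
  have hdisjU : Disjoint (Fintype.piFinset (Stmt8.CA ℓ r))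
      ((Finset.Icc 1 k).biUnion fun i => Fintype.piFinset (Stmt8.CB ℓ r z i)) := by
    rw [Finset.disjoint_biUnion_right]
    intro i hik
    rw [Finset.mem_Icc] at hik
    have hi1 := hik.1
    have hiℓ : i ≤ ℓ := hik.2.trans hk
    rw [Finset.disjoint_left]
    intro v hvA hvB
    obtain ⟨-, -, hvp⟩ := Stmt8.TA_spec hr0 hℓ hvA
    obtain ⟨-, hvi, -, -⟩ := Stmt8.TB_spec hr0 hℓ hi1 hiℓ (hzd' i hi1 hiℓ) hvB
    have h := hvp i hi1 hiℓ
    rw [hvi, zero_pow hr0.ne'] at h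
    exact zero_ne_one h
  have hcard : (Stmt8.WF ℓ k r z).card = k * r ^ (ℓ - 2) + r ^ (ℓ - 1) := by
    rw [Stmt8.WF, Finset.card_union_of_disjoint hdisjU, Finset.card_biUnion hdisjBB, cardTA]
    have hsum : ∑ i ∈ Finset.Icc 1 k, (Fintype.piFinset (Stmt8.CB ℓ r z i)).card
        = k * r ^ (ℓ - 2) := by
      have hcongr : ∀ i ∈ Finset.Icc 1 k,
          (Fintype.piFinset (Stmt8.CB ℓ r z i)).card = r ^ (ℓ - 2) := by
        intro i hi
        rw [Finset.mem_Icc] at hi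
        exact cardTB i hi.1 (hi.2.trans hk)
      rw [Finset.sum_congr rfl hcongr, Finset.sum_const, Nat.card_Icc, smul_eq_mul]
      simp
    rw [hsum]
    omega
  rw [hset, Set.ncard_image_of_injOn hinj, Set.ncard_coe_finset, hcard]
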